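/- Let α be a linear form and φ = α⁴ ∈ S⁴ (Petrov type (4)). Then conf(φ) is a complex subspace of sl₂(ℂ) of dimension 2 and aut(φ) is a complex subspace of dimension 1. -/

import Mathlib

open MvPolynomial

/-- The action of `A ∈ sl₂(ℂ)` on `ℂ[x,y]` by derivations:
`A·f = −(a x + c y) ∂f/∂x − (b x + d y) ∂f/∂y` for `A = [[a,b],[c,d]]`. -/
noncomputable def sAct (A : Matrix (Fin 2) (Fin 2) ℂ) (f : MvPolynomial (Fin 2) ℂ) :
    MvPolynomial (Fin 2) ℂ :=
  -((C (A 0 0) * X 0 + C (A 1 0) * X 1) * pderiv 0 f)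
    - ((C (A 0 1) * X 0 + C (A 1 1) * X 1) * pderiv 1 f)

lemma linform_rep (α : MvPolynomial (Fin 2) ℂ) (hα : α.IsHomogeneous 1) :
    α = C (coeff (Finsupp.single 0 1) α) * X 0 + C (coeff (Finsupp.single 1 1) α) * X 1 := by
  ext m
  simp only [coeff_add, coeff_C_mul, coeff_X']
  by_cases h0 : Finsupp.single (0 : Fin 2) 1 = m
  · subst h0
    rw [if_pos rfl, if_neg (by simp [Finsupp.single_eq_single_iff])]
    ring
  by_cases h1 : Finsupp.single (1 : Fin 2) 1 = m
  · subst h1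
    rw [if_pos rfl, if_neg (by simp [Finsupp.single_eq_single_iff])]
    ring
  · rw [if_neg h0, if_neg h1]
    have hd : m.degree ≠ 1 := by
      intro hd
      have hsum : m 0 + m 1 = 1 := by
        have := hd
        rw [Finsupp.degree] at this
        calc m 0 + m 1 = ∑ i, m i := (Fin.sum_univ_two m).symm
          _ = ∑ i ∈ m.support, m i := (Finset.sum_subset (Finset.subset_univ m.support) (by intro x _ hx; simpa using hx)).symm
          _ = 1 := this
      have : (m 0 = 1 ∧ m 1 = 0) ∨ (m 0 = 0 ∧ m 1 = 1) := by omega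
      rcases this with ⟨h, h'⟩ | ⟨h, h'⟩
      · exact h0 (by ext i; fin_cases i <;> simp [h, h', Finsupp.single_apply])
      · exact h1 (by ext i; fin_cases i <;> simp [h, h', Finsupp.single_apply])
    rw [hα.coeff_eq_zero hd]
    ring

lemma linear_eq_iff (u v u' v' : ℂ) :
    (C u * X 0 + C v * X 1 : MvPolynomial (Fin 2) ℂ) = C u' * X 0 + C v' * X 1 ↔
      u = u' ∧ v = v' := by
  constructor
  · intro h
    constructor
    · have := congrArg (coeff (Finsupp.single 0 1)) h
      simpa [coeff_X', Finsupp.single_eq_single_iff] using this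
    · have := congrArg (coeff (Finsupp.single 1 1)) h
      simpa [coeff_X', Finsupp.single_eq_single_iff] using this
  · rintro ⟨rfl, rfl⟩; rfl

lemma lin_ne (p q : ℂ) (h : p ≠ 0 ∨ q ≠ 0) :
    (C p * X 0 + C q * X 1 : MvPolynomial (Fin 2) ℂ) ≠ 0 := by
  intro h0
  rw [show (0 : MvPolynomial (Fin 2) ℂ) = C 0 * X 0 + C 0 * X 1 by simp] at h0
  rw [linear_eq_iff] at h0
  rcases h with h | h <;> [exact h h0.1; exact h h0.2]

lemma sAct_quartic (p q : ℂ) (A : Matrix (Fin 2) (Fin 2) ℂ) :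
    sAct A ((C p * X 0 + C q * X 1)^4) =
      (C (-(4*(A 0 0 * p + A 0 1 * q))) * X 0 + C (-(4*(A 1 0 * p + A 1 1 * q))) * X 1)
        * (C p * X 0 + C q * X 1)^3 := by
  have h0 : pderiv 0 (C p * X 0 + C q * X 1 : MvPolynomial (Fin 2) ℂ) = C p := by
    simp [pderiv_C_mul]
  have h1 : pderiv 1 (C p * X 0 + C q * X 1 : MvPolynomial (Fin 2) ℂ) = C q := by
    simp [pderiv_C_mul]
  rw [sAct, pderiv_pow, pderiv_pow, h0, h1]
  simp only [C_neg, C_mul, C_add, map_ofNat]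
  push_cast
  ring

lemma eigen_iff (p q : ℂ) (hne : (C p * X 0 + C q * X 1 : MvPolynomial (Fin 2) ℂ) ≠ 0)
    (A : Matrix (Fin 2) (Fin 2) ℂ) (c : ℂ) :
    sAct A ((C p * X 0 + C q * X 1)^4) = c • ((C p * X 0 + C q * X 1)^4) ↔
      (-(4*(A 0 0 * p + A 0 1 * q)) = c * p ∧ -(4*(A 1 0 * p + A 1 1 * q)) = c * q) := by
  have h3 : ((C p * X 0 + C q * X 1 : MvPolynomial (Fin 2) ℂ))^3 ≠ 0 := pow_ne_zero _ hne
  have hr : c • ((C p * X 0 + C q * X 1 : MvPolynomial (Fin 2) ℂ))^4 =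
      (C (c*p) * X 0 + C (c*q) * X 1) * (C p * X 0 + C q * X 1)^3 := by
    rw [smul_eq_C_mul]; simp only [C_mul]; ring
  rw [sAct_quartic, hr, mul_left_inj' h3, linear_eq_iff]

lemma act_zero_iff (p q : ℂ) (hne : (C p * X 0 + C q * X 1 : MvPolynomial (Fin 2) ℂ) ≠ 0)
    (A : Matrix (Fin 2) (Fin 2) ℂ) :
    sAct A ((C p * X 0 + C q * X 1)^4) = 0 ↔
      (A 0 0 * p + A 0 1 * q = 0 ∧ A 1 0 * p + A 1 1 * q = 0) := by
  have h := eigen_iff p q hne A 0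
  rw [zero_smul] at h
  rw [h]
  constructor
  · rintro ⟨h1, h2⟩
    exact ⟨by linear_combination -h1/4, by linear_combination -h2/4⟩
  · rintro ⟨h1, h2⟩
    exact ⟨by linear_combination -4*h1, by linear_combination -4*h2⟩

lemma aut_p (p q : ℂ) (hp : p ≠ 0) :
    ∃ S : Submodule ℂ (Matrix (Fin 2) (Fin 2) ℂ),
      (S : Set (Matrix (Fin 2) (Fin 2) ℂ)) =
        {A | A.trace = 0 ∧ sAct A ((C p * X 0 + C q * X 1) ^ 4) = 0} ∧
      Module.finrank ℂ S = 1 := by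
  have hne := lin_ne p q (Or.inl hp)
  set A0 : Matrix (Fin 2) (Fin 2) ℂ := !![-(p*q), p^2; -(q^2), p*q] with hA0
  have hA0ne : A0 ≠ 0 := by
    intro h
    have h2 := congrFun (congrFun h 0) 1
    simp [hA0] at h2
    exact hp h2
  refine ⟨ℂ ∙ A0, ?_, finrank_span_singleton hA0ne⟩
  ext A
  simp only [SetLike.mem_coe, Submodule.mem_span_singleton, Set.mem_setOf_eq,
    Matrix.trace_fin_two, act_zero_iff p q hne]
  constructor
  · rintro ⟨t, rfl⟩
    simp only [hA0, Matrix.smul_apply, Matrix.cons_val', Matrix.cons_val_zero,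
      Matrix.cons_val_one, Matrix.head_cons, Matrix.head_fin_const, Matrix.empty_val',
      Matrix.cons_val_fin_one, Matrix.of_apply, smul_eq_mul]
    refine ⟨by ring, by ring, by ring⟩
  · rintro ⟨htr, h1, h2⟩
    refine ⟨A 0 1 / p^2, ?_⟩
    ext i j
    fin_cases i <;> fin_cases j <;>
      simp only [hA0, Matrix.smul_apply, Matrix.cons_val', Matrix.cons_val_zero,
        Matrix.cons_val_one, Matrix.head_cons, Matrix.head_fin_const, Matrix.empty_val',
        Matrix.cons_val_fin_one, Matrix.of_apply, smul_eq_mul, Fin.isValue, Fin.zero_eta, Fin.mk_one] <;>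
      field_simp
    · linear_combination -h1
    · linear_combination -q*h1 - p*h2 + p*q*htr
    · linear_combination h1 - p*htr

lemma aut_q (p q : ℂ) (hq : q ≠ 0) :
    ∃ S : Submodule ℂ (Matrix (Fin 2) (Fin 2) ℂ),
      (S : Set (Matrix (Fin 2) (Fin 2) ℂ)) =
        {A | A.trace = 0 ∧ sAct A ((C p * X 0 + C q * X 1) ^ 4) = 0} ∧
      Module.finrank ℂ S = 1 := by
  have hne := lin_ne p q (Or.inr hq)
  set A0 : Matrix (Fin 2) (Fin 2) ℂ := !![-(p*q), p^2; -(q^2), p*q] with hA0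
  have hA0ne : A0 ≠ 0 := by
    intro h
    have h2 := congrFun (congrFun h 1) 0
    simp [hA0] at h2
    exact hq h2
  refine ⟨ℂ ∙ A0, ?_, finrank_span_singleton hA0ne⟩
  ext A
  simp only [SetLike.mem_coe, Submodule.mem_span_singleton, Set.mem_setOf_eq,
    Matrix.trace_fin_two, act_zero_iff p q hne]
  constructor
  · rintro ⟨t, rfl⟩
    simp only [hA0, Matrix.smul_apply, Matrix.cons_val', Matrix.cons_val_zero,
      Matrix.cons_val_one, Matrix.head_cons, Matrix.head_fin_const, Matrix.empty_val',
      Matrix.cons_val_fin_one, Matrix.of_apply, smul_eq_mul]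
    refine ⟨by ring, by ring, by ring⟩
  · rintro ⟨htr, h1, h2⟩
    refine ⟨-(A 1 0) / q^2, ?_⟩
    ext i j
    fin_cases i <;> fin_cases j <;>
      simp only [hA0, Matrix.smul_apply, Matrix.cons_val', Matrix.cons_val_zero,
        Matrix.cons_val_one, Matrix.head_cons, Matrix.head_fin_const, Matrix.empty_val',
        Matrix.cons_val_fin_one, Matrix.of_apply, smul_eq_mul, Fin.isValue, Fin.zero_eta, Fin.mk_one] <;>
      field_simp
    · linear_combination h2 - q*htr
    · linear_combination -q*h1 - p*h2 + p*q*htr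
    · linear_combination -h2

lemma conf_p (p q : ℂ) (hp : p ≠ 0) :
    ∃ S : Submodule ℂ (Matrix (Fin 2) (Fin 2) ℂ),
      (S : Set (Matrix (Fin 2) (Fin 2) ℂ)) =
        {A | A.trace = 0 ∧ ∃ c : ℂ, sAct A ((C p * X 0 + C q * X 1) ^ 4)
          = c • ((C p * X 0 + C q * X 1) ^ 4)} ∧
      Module.finrank ℂ S = 2 := by
  have hne := lin_ne p q (Or.inl hp)
  set A0 : Matrix (Fin 2) (Fin 2) ℂ := !![-(p*q), p^2; -(q^2), p*q] with hA0
  set A1 : Matrix (Fin 2) (Fin 2) ℂ := !![1, 0; 2*q/p, -1] with hA1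
  have hLI : LinearIndependent ℂ ![A1, A0] := by
    rw [LinearIndependent.pair_iff]
    intro s t h
    have h01 := congrFun (congrFun h 0) 1
    have h00 := congrFun (congrFun h 0) 0
    simp [hA0, hA1] at h01 h00
    have ht : t = 0 := by
      rcases h01 with h | h
      · exact h
      · exact absurd h hp
    subst ht
    simp at h00
    exact ⟨h00, rfl⟩
  refine ⟨Submodule.span ℂ {A1, A0}, ?_, ?_⟩
  swap
  · rw [show ({A1, A0} : Set (Matrix (Fin 2) (Fin 2) ℂ)) = Set.range ![A1, A0] by
      rw [Set.pair_comm]; simp [Matrix.range_cons, Matrix.range_empty]]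
    rw [finrank_span_eq_card hLI]
    simp
  ext A
  simp only [SetLike.mem_coe, Submodule.mem_span_pair, Set.mem_setOf_eq,
    Matrix.trace_fin_two]
  constructor
  · rintro ⟨s, t, rfl⟩
    simp only [hA0, hA1, Matrix.add_apply, Matrix.smul_apply, Matrix.cons_val',
      Matrix.cons_val_zero, Matrix.cons_val_one, Matrix.head_cons, Matrix.head_fin_const,
      Matrix.empty_val', Matrix.cons_val_fin_one, Matrix.of_apply, smul_eq_mul]
    refine ⟨by ring, -4*s, ?_⟩
    rw [eigen_iff p q hne]
    simp only [Matrix.add_apply, Matrix.smul_apply, hA0, hA1, Matrix.cons_val',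
      Matrix.cons_val_zero, Matrix.cons_val_one, Matrix.head_cons, Matrix.head_fin_const,
      Matrix.empty_val', Matrix.cons_val_fin_one, Matrix.of_apply, smul_eq_mul]
    constructor
    · ring
    · field_simp
      ring
  · rintro ⟨htr, c, hc⟩
    rw [eigen_iff p q hne] at hc
    obtain ⟨e1, e2⟩ := hc
    have hcross : (A 1 0 * p + A 1 1 * q) * p = (A 0 0 * p + A 0 1 * q) * q := by
      linear_combination (q*e1 - p*e2)/4
    refine ⟨(A 0 0 * p + A 0 1 * q)/p, A 0 1/p^2, ?_⟩
    ext i j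
    fin_cases i <;> fin_cases j <;>
      simp only [hA0, hA1, Matrix.add_apply, Matrix.smul_apply, Matrix.cons_val',
        Matrix.cons_val_zero, Matrix.cons_val_one, Matrix.head_cons, Matrix.head_fin_const,
        Matrix.empty_val', Matrix.cons_val_fin_one, Matrix.of_apply, smul_eq_mul, Fin.isValue, Fin.zero_eta, Fin.mk_one]
    · field_simp
      ring
    · field_simp
      ring
    · field_simp
      linear_combination -hcross + p*q*htr
    · field_simp
      linear_combination -p*htr

lemma conf_q (p q : ℂ) (hq : q ≠ 0) :
    ∃ S : Submodule ℂ (Matrix (Fin 2) (Fin 2) ℂ),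
      (S : Set (Matrix (Fin 2) (Fin 2) ℂ)) =
        {A | A.trace = 0 ∧ ∃ c : ℂ, sAct A ((C p * X 0 + C q * X 1) ^ 4)
          = c • ((C p * X 0 + C q * X 1) ^ 4)} ∧
      Module.finrank ℂ S = 2 := by
  have hne := lin_ne p q (Or.inr hq)
  set A0 : Matrix (Fin 2) (Fin 2) ℂ := !![-(p*q), p^2; -(q^2), p*q] with hA0
  set A1 : Matrix (Fin 2) (Fin 2) ℂ := !![-1, 2*p/q; 0, 1] with hA1
  have hLI : LinearIndependent ℂ ![A1, A0] := by
    rw [LinearIndependent.pair_iff]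
    intro s t h
    have h10 := congrFun (congrFun h 1) 0
    have h11 := congrFun (congrFun h 1) 1
    simp [hA0, hA1] at h10 h11
    have ht : t = 0 := by
      rcases h10 with h | h
      · exact h
      · exact absurd h hq
    subst ht
    simp at h11
    exact ⟨h11, rfl⟩
  refine ⟨Submodule.span ℂ {A1, A0}, ?_, ?_⟩
  swap
  · rw [show ({A1, A0} : Set (Matrix (Fin 2) (Fin 2) ℂ)) = Set.range ![A1, A0] by
      rw [Set.pair_comm]; simp [Matrix.range_cons, Matrix.range_empty]]
    rw [finrank_span_eq_card hLI]
    simp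
  ext A
  simp only [SetLike.mem_coe, Submodule.mem_span_pair, Set.mem_setOf_eq,
    Matrix.trace_fin_two]
  constructor
  · rintro ⟨s, t, rfl⟩
    simp only [hA0, hA1, Matrix.add_apply, Matrix.smul_apply, Matrix.cons_val',
      Matrix.cons_val_zero, Matrix.cons_val_one, Matrix.head_cons, Matrix.head_fin_const,
      Matrix.empty_val', Matrix.cons_val_fin_one, Matrix.of_apply, smul_eq_mul]
    refine ⟨by ring, -4*s, ?_⟩
    rw [eigen_iff p q hne]
    simp only [Matrix.add_apply, Matrix.smul_apply, hA0, hA1, Matrix.cons_val',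
      Matrix.cons_val_zero, Matrix.cons_val_one, Matrix.head_cons, Matrix.head_fin_const,
      Matrix.empty_val', Matrix.cons_val_fin_one, Matrix.of_apply, smul_eq_mul]
    constructor
    · field_simp
      ring
    · ring
  · rintro ⟨htr, c, hc⟩
    rw [eigen_iff p q hne] at hc
    obtain ⟨e1, e2⟩ := hc
    have hcross : (A 1 0 * p + A 1 1 * q) * p = (A 0 0 * p + A 0 1 * q) * q := by
      linear_combination (q*e1 - p*e2)/4
    refine ⟨(A 1 0 * p + A 1 1 * q)/q, -(A 1 0)/q^2, ?_⟩
    ext i j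
    fin_cases i <;> fin_cases j <;>
      simp only [hA0, hA1, Matrix.add_apply, Matrix.smul_apply, Matrix.cons_val',
        Matrix.cons_val_zero, Matrix.cons_val_one, Matrix.head_cons, Matrix.head_fin_const,
        Matrix.empty_val', Matrix.cons_val_fin_one, Matrix.of_apply, smul_eq_mul, Fin.isValue, Fin.zero_eta, Fin.mk_one]
    · field_simp
      linear_combination -q*htr
    · field_simp
      linear_combination hcross + p*q*htr
    · field_simp
      ring
    · field_simp
      ring

/-- A linear form: a nonzero homogeneous degree-1 polynomial in `ℂ[x,y]`. -/
def IsLinForm (α : MvPolynomial (Fin 2) ℂ) : Prop := α ≠ 0 ∧ α.IsHomogeneous 1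

/-- Petrov type (4)=(N): for `φ = α⁴` with `α` a linear form, `conf(φ)` is a
2-dimensional and `aut(φ)` a 1-dimensional complex subspace of `sl₂(ℂ)`. -/
theorem aut_conf_type_N (α : MvPolynomial (Fin 2) ℂ) (hα : IsLinForm α) :
    (∃ S : Submodule ℂ (Matrix (Fin 2) (Fin 2) ℂ),
      (S : Set (Matrix (Fin 2) (Fin 2) ℂ)) =
        {A | A.trace = 0 ∧ ∃ c : ℂ, sAct A (α ^ 4) = c • (α ^ 4)} ∧
      Module.finrank ℂ S = 2) ∧
    ∃ S : Submodule ℂ (Matrix (Fin 2) (Fin 2) ℂ),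
      (S : Set (Matrix (Fin 2) (Fin 2) ℂ)) =
        {A | A.trace = 0 ∧ sAct A (α ^ 4) = 0} ∧
      Module.finrank ℂ S = 1 := by
  obtain ⟨hne0, hhom⟩ := hα
  have hrep := linform_rep α hhom
  set p := coeff (Finsupp.single 0 1) α with hp'
  set q := coeff (Finsupp.single 1 1) α with hq'
  rw [hrep] at hne0 ⊢
  have hpq : p ≠ 0 ∨ q ≠ 0 := by
    by_contra h
    push_neg at h
    exact hne0 (by rw [h.1, h.2]; simp)
  rcases hpq with hp | hq
  · exact ⟨conf_p p q hp, aut_p p q hp⟩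
  · exact ⟨conf_q p q hq, aut_q p q hq⟩
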